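/- arXiv:1909.11773 — 3 statements merged into one kernel-verified Lean document; each statement's English description precedes it below -/
import Mathlib

section
/- Let A and B be disjoint subsets of {1,…,p} with B nonempty and |A| + |B| ≤ 6s*. For j ∈ B let Ψ_j = Φ_{A∪{j}} − Φ_A. Then for every v ∈ ℝ^n, max_{j∈B} ‖Ψ_j v‖² ≥ ‖X_Bᵀ (I − Φ_A) v‖² / (|B| · n), where X_B is the n×|B| submatrix of X with columns (X_j : j ∈ B). -/
open scoped BigOperators
open Finset

noncomputable section

/-- Span of the columns `X j`, `j ∈ S`. -/
def colSpan {n p : ℕ} (X : Fin p → EuclideanSpace ℝ (Fin n)) (S : Finset (Fin p)) :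
    Submodule ℝ (EuclideanSpace ℝ (Fin n)) :=
  Submodule.span ℝ (X '' ↑S)

/-- `Φ_S`, the orthogonal projection of ℝ^n onto the span of the columns in `S`. -/
noncomputable def proj {n p : ℕ} (X : Fin p → EuclideanSpace ℝ (Fin n)) (S : Finset (Fin p)) :
    EuclideanSpace ℝ (Fin n) →ₗ[ℝ] EuclideanSpace ℝ (Fin n) :=
  (colSpan X S).subtype ∘ₗ ((colSpan X S).orthogonalProjection).toLinearMap

/-- Restricted eigenvalue condition: `‖X_S w‖² ≥ n ν ‖w‖²` for all `S` with `|S| ≤ m`. -/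
def RECond {n p : ℕ} (X : Fin p → EuclideanSpace ℝ (Fin n)) (ν : ℝ) (m : ℕ) : Prop :=
  ∀ S : Finset (Fin p), S.card ≤ m → ∀ w : Fin p → ℝ,
    (n : ℝ) * ν * ∑ j ∈ S, w j ^ 2 ≤ ‖∑ j ∈ S, w j • X j‖ ^ 2

end

/-- with Ψ_j = Φ_{A∪{j}} − Φ_A, for every v,
max_{j∈B} ‖Ψ_j v‖² ≥ ‖X_Bᵀ(I−Φ_A)v‖²/(|B|·n). -/
theorem stmt4 {n p s : ℕ} (hn : 0 < n) (hp : 0 < p) (hs : 0 < s)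
    (X : Fin p → EuclideanSpace ℝ (Fin n))
    (hX : ∀ j, ‖X j‖ = Real.sqrt n)
    {ν : ℝ} (hν : 0 < ν) (hRE : RECond X ν (6 * s))
    (A B : Finset (Fin p)) (hdisj : Disjoint A B) (hB : B.Nonempty)
    (hcard : A.card + B.card ≤ 6 * s)
    (v : EuclideanSpace ℝ (Fin n)) :
    (∑ j ∈ B, (inner ℝ (X j) (v - proj X A v) : ℝ) ^ 2) / ((B.card : ℝ) * n) ≤
      B.sup' hB fun j => ‖proj X (insert j A) v - proj X A v‖ ^ 2 := by
  classical
  set m := B.sup' hB fun j => ‖proj X (insert j A) v - proj X A v‖ ^ 2 with hm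
  have key : ∀ j ∈ B, (inner ℝ (X j) (v - proj X A v) : ℝ) ^ 2 ≤ (n : ℝ) * m := by
    intro j hj
    have hXj : X j ∈ colSpan X (insert j A) := by
      apply Submodule.subset_span
      exact ⟨j, by simp, rfl⟩
    have horth : (inner ℝ (X j) (v - proj X (insert j A) v) : ℝ) = 0 := by
      have h := Submodule.sub_starProjection_mem_orthogonal (K := colSpan X (insert j A)) v
      exact (Submodule.mem_orthogonal _ _).1 h (X j) hXj
    have heq : (inner ℝ (X j) (v - proj X A v) : ℝ)
        = inner ℝ (X j) (proj X (insert j A) v - proj X A v) := by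
      have hsplit : v - proj X A v
          = (v - proj X (insert j A) v) + (proj X (insert j A) v - proj X A v) := by abel
      rw [hsplit, inner_add_right, horth, zero_add]
    have hcs : |(inner ℝ (X j) (proj X (insert j A) v - proj X A v) : ℝ)|
        ≤ ‖X j‖ * ‖proj X (insert j A) v - proj X A v‖ := abs_real_inner_le_norm _ _
    have h1 : (inner ℝ (X j) (v - proj X A v) : ℝ) ^ 2
        ≤ ‖X j‖ ^ 2 * ‖proj X (insert j A) v - proj X A v‖ ^ 2 := by
      rw [heq, ← sq_abs, ← mul_pow]
      exact pow_le_pow_left₀ (abs_nonneg _) hcs 2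
    have hXn : ‖X j‖ ^ 2 = (n : ℝ) := by
      rw [hX j, Real.sq_sqrt (Nat.cast_nonneg n)]
    have hle : ‖proj X (insert j A) v - proj X A v‖ ^ 2 ≤ m :=
      le_sup' (fun j => ‖proj X (insert j A) v - proj X A v‖ ^ 2) hj
    calc (inner ℝ (X j) (v - proj X A v) : ℝ) ^ 2
        ≤ ‖X j‖ ^ 2 * ‖proj X (insert j A) v - proj X A v‖ ^ 2 := h1
      _ = (n : ℝ) * ‖proj X (insert j A) v - proj X A v‖ ^ 2 := by rw [hXn]
      _ ≤ (n : ℝ) * m := by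
          apply mul_le_mul_of_nonneg_left hle (Nat.cast_nonneg n)
  have hsum : (∑ j ∈ B, (inner ℝ (X j) (v - proj X A v) : ℝ) ^ 2)
      ≤ (B.card : ℝ) * ((n : ℝ) * m) := by
    calc (∑ j ∈ B, (inner ℝ (X j) (v - proj X A v) : ℝ) ^ 2)
        ≤ ∑ _j ∈ B, (n : ℝ) * m := Finset.sum_le_sum key
      _ = (B.card : ℝ) * ((n : ℝ) * m) := by rw [Finset.sum_const, nsmul_eq_mul]
  have hpos : (0 : ℝ) < (B.card : ℝ) * n := by
    have : 0 < B.card := Finset.card_pos.2 hB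
    positivity
  rw [div_le_iff₀ hpos]
  calc (∑ j ∈ B, (inner ℝ (X j) (v - proj X A v) : ℝ) ^ 2)
      ≤ (B.card : ℝ) * ((n : ℝ) * m) := hsum
    _ = m * ((B.card : ℝ) * n) := by ring
end

section
/- Let A and B be disjoint subsets of {1,…,p} with B nonempty and |A| + |B| ≤ 6s*. Then for every t ∈ ℝ^B, max_{j∈B} ‖(Φ_{A∪{j}} − Φ_A) X_B t‖² ≥ n ν² ‖t‖² / |B| ≥ n ν² min_{j∈B} t_j², where X_B t = Σ_{j∈B} t_j X_j. -/
open scoped BigOperators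
open Finset

open scoped RealInnerProductSpace

/-- max_{j∈B} ‖(Φ_{A∪{j}} − Φ_A) X_B t‖² ≥ nν²‖t‖²/|B| ≥ nν² min_{j∈B} t_j². -/
theorem stmt5 {n p s : ℕ} (hn : 0 < n) (hp : 0 < p) (hs : 0 < s)
    (X : Fin p → EuclideanSpace ℝ (Fin n))
    (hX : ∀ j, ‖X j‖ = Real.sqrt n)
    {ν : ℝ} (hν : 0 < ν) (hRE : RECond X ν (6 * s))
    (A B : Finset (Fin p)) (hdisj : Disjoint A B) (hB : B.Nonempty)
    (hcard : A.card + B.card ≤ 6 * s)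
    (t : Fin p → ℝ)
    (v : EuclideanSpace ℝ (Fin n)) (hv : v = ∑ k ∈ B, t k • X k) :
    (n : ℝ) * ν ^ 2 * (∑ j ∈ B, t j ^ 2) / B.card ≤
      (B.sup' hB fun j => ‖proj X (insert j A) v - proj X A v‖ ^ 2) ∧
    (n : ℝ) * ν ^ 2 * (B.inf' hB fun j => t j ^ 2) ≤
      (n : ℝ) * ν ^ 2 * (∑ j ∈ B, t j ^ 2) / B.card := by
  classical
  have hc0 : (0:ℝ) < B.card := by exact_mod_cast hB.card_pos
  have hnR : (0:ℝ) < n := by exact_mod_cast hn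
  set M : ℝ := B.sup' hB fun j => ‖proj X (insert j A) v - proj X A v‖ ^ 2 with hM
  set T : ℝ := ∑ j ∈ B, t j ^ 2 with hTdef
  have hT0 : 0 ≤ T := Finset.sum_nonneg fun j _ => sq_nonneg _
  clear_value T
  have hM0 : 0 ≤ M := by
    obtain ⟨j, hj⟩ := hB
    exact le_trans (sq_nonneg (‖proj X (insert j A) v - proj X A v‖))
      (Finset.le_sup' (fun j => ‖proj X (insert j A) v - proj X A v‖ ^ 2) hj)
  constructor
  · -- main inequality
    set r : EuclideanSpace ℝ (Fin n) := v - proj X A v with hr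
    -- r ⊥ colSpan X A
    have hrA : ∀ u ∈ colSpan X A, ⟪r, u⟫ = 0 := fun u hu =>
      Submodule.starProjection_inner_eq_zero (K := colSpan X A) v u hu
    have hmem : proj X A v ∈ colSpan X A :=
      Submodule.coe_mem ((colSpan X A).orthogonalProjection v)
    -- coefficients of proj X A v
    obtain ⟨c, hc⟩ : ∃ c : ↑A → ℝ, ∑ i, c i • X ↑i = proj X A v := by
      have hspan : colSpan X A = Submodule.span ℝ (Set.range fun i : ↑A => X ↑i) := by
        rw [colSpan, Set.image_eq_range]; rfl
      exact (Submodule.mem_span_range_iff_exists_fun ℝ).mp (hspan ▸ hmem)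
    set w : Fin p → ℝ := fun j => if h : j ∈ A then -c ⟨j, h⟩ else t j with hw
    have hwB : ∀ j ∈ B, w j = t j := by
      intro j hj
      have : j ∉ A := fun hA => (Finset.disjoint_left.mp hdisj hA) hj
      simp [hw, this]
    have hrsum : r = ∑ j ∈ A ∪ B, w j • X j := by
      rw [Finset.sum_union hdisj]
      have hAsum : ∑ j ∈ A, w j • X j = -(proj X A v) := by
        rw [← hc, ← Finset.sum_neg_distrib, ← Finset.sum_attach A (fun j => w j • X j)]
        refine Finset.sum_congr rfl fun i _ => ?_
        have : w ↑i = -c i := by simp [hw, i.2]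
        rw [this, neg_smul]
      have hBsum : ∑ j ∈ B, w j • X j = v := by
        rw [hv]; exact Finset.sum_congr rfl fun j hj => by rw [hwB j hj]
      rw [hAsum, hBsum, hr]; abel
    have hcardAB : (A ∪ B).card ≤ 6 * s := le_trans (Finset.card_union_le A B) hcard
    have hRE' : (n : ℝ) * ν * ∑ j ∈ A ∪ B, w j ^ 2 ≤ ‖r‖ ^ 2 := by
      rw [hrsum]; exact hRE _ hcardAB w
    have hTle : T ≤ ∑ j ∈ A ∪ B, w j ^ 2 := by
      rw [Finset.sum_union hdisj, hTdef]
      have h1 : ∑ j ∈ B, w j ^ 2 = ∑ j ∈ B, t j ^ 2 :=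
        Finset.sum_congr rfl fun j hj => by rw [hwB j hj]
      have h2 : 0 ≤ ∑ j ∈ A, w j ^ 2 := Finset.sum_nonneg fun j _ => sq_nonneg _
      linarith
    have hlow : (n : ℝ) * ν * T ≤ ‖r‖ ^ 2 := by
      refine le_trans ?_ hRE'
      have : (0:ℝ) ≤ (n:ℝ) * ν := by positivity
      nlinarith [hTle]
    -- ‖r‖² = ∑_B t_j ⟪X_j, r⟫
    have hinner_v : ⟪v, r⟫ = ‖r‖ ^ 2 := by
      have hv' : v = r + proj X A v := by rw [hr]; abel
      have h0 : ⟪proj X A v, r⟫ = 0 := by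
        rw [real_inner_comm]; exact hrA _ hmem
      rw [hv', inner_add_left, h0, real_inner_self_eq_norm_sq]
      ring
    have hnormr : ‖r‖ ^ 2 = ∑ j ∈ B, t j * ⟪X j, r⟫ := by
      rw [← hinner_v, hv, sum_inner]
      exact Finset.sum_congr rfl fun j _ => real_inner_smul_left _ _ _
    -- each inner product squared is ≤ n * M
    have hd : ∀ j ∈ B, (⟪X j, r⟫) ^ 2 ≤ (n : ℝ) * M := by
      intro j hj
      set d : EuclideanSpace ℝ (Fin n) := proj X (insert j A) v - proj X A v with hdj
      have heq : ⟪X j, r⟫ = ⟪X j, d⟫ := by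
        have h0 : ⟪X j, v - proj X (insert j A) v⟫ = 0 := by
          rw [real_inner_comm]
          exact Submodule.starProjection_inner_eq_zero (K := colSpan X (insert j A)) v (X j)
            (Submodule.subset_span ⟨j, by simp, rfl⟩)
        have hsplit : r = (v - proj X (insert j A) v) + d := by rw [hr, hdj]; abel
        rw [hsplit, inner_add_right, h0, zero_add]
      have habs : |⟪X j, d⟫| ≤ ‖X j‖ * ‖d‖ := abs_real_inner_le_norm _ _
      have hsq : (⟪X j, d⟫) ^ 2 ≤ (‖X j‖ * ‖d‖) ^ 2 := by
        rw [← sq_abs]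
        exact pow_le_pow_left₀ (abs_nonneg _) habs 2
      have hXn : ‖X j‖ ^ 2 = (n : ℝ) := by
        rw [hX j, Real.sq_sqrt (by positivity)]
      have hdM : ‖d‖ ^ 2 ≤ M := Finset.le_sup' (fun j => ‖proj X (insert j A) v - proj X A v‖ ^ 2) hj
      rw [heq]
      calc (⟪X j, d⟫) ^ 2 ≤ (‖X j‖ * ‖d‖) ^ 2 := hsq
        _ = ‖X j‖ ^ 2 * ‖d‖ ^ 2 := by ring
        _ = (n : ℝ) * ‖d‖ ^ 2 := by rw [hXn]
        _ ≤ (n : ℝ) * M := by nlinarith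
    -- Cauchy–Schwarz
    have hsumd : ∑ j ∈ B, (⟪X j, r⟫) ^ 2 ≤ (B.card : ℝ) * ((n : ℝ) * M) := by
      have := Finset.sum_le_card_nsmul B (fun j => (⟪X j, r⟫) ^ 2) ((n : ℝ) * M) hd
      simpa [nsmul_eq_mul] using this
    have hCS : (‖r‖ ^ 2) ^ 2 ≤ T * ((B.card : ℝ) * ((n : ℝ) * M)) := by
      rw [hnormr]
      refine le_trans (Finset.sum_mul_sq_le_sq_mul_sq B t (fun j => ⟪X j, r⟫)) ?_
      rw [← hTdef]
      exact mul_le_mul_of_nonneg_left hsumd hT0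
    rcases eq_or_lt_of_le hT0 with hTz | hTpos
    · rw [← hTz, mul_zero, zero_div]; exact hM0
    · rw [div_le_iff₀ hc0]
      have hsq2 : ((n : ℝ) * ν * T) ^ 2 ≤ (‖r‖ ^ 2) ^ 2 :=
        pow_le_pow_left₀ (by positivity) hlow 2
      have key : ((n : ℝ) * ν * T) ^ 2 ≤ T * ((B.card : ℝ) * ((n : ℝ) * M)) :=
        hsq2.trans hCS
      have hnT : (0:ℝ) < (n : ℝ) * T := mul_pos hnR hTpos
      refine le_of_mul_le_mul_right ?_ hnT
      calc (n : ℝ) * ν ^ 2 * T * ((n : ℝ) * T) = ((n : ℝ) * ν * T) ^ 2 := by ring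
        _ ≤ T * ((B.card : ℝ) * ((n : ℝ) * M)) := key
        _ = M * (B.card : ℝ) * ((n : ℝ) * T) := by ring
  · -- min ≤ average
    have hmin : (B.inf' hB fun j => t j ^ 2) * B.card ≤ T := by
      have := Finset.card_nsmul_le_sum B (fun j => t j ^ 2) (B.inf' hB fun j => t j ^ 2)
        (fun x hx => Finset.inf'_le _ hx)
      rw [hTdef]
      simpa [nsmul_eq_mul, mul_comm] using this
    rw [le_div_iff₀ hc0]
    have hnν : (0:ℝ) ≤ (n : ℝ) * ν ^ 2 := by positivity
    calc ((n : ℝ) * ν ^ 2 * B.inf' hB fun j => t j ^ 2) * (B.card : ℝ)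
        = (n : ℝ) * ν ^ 2 * ((B.inf' hB fun j => t j ^ 2) * (B.card : ℝ)) := by ring
      _ ≤ (n : ℝ) * ν ^ 2 * T := mul_le_mul_of_nonneg_left hmin hnν
end

section
/- Let S ⊆ {1,…,p} with T ⊄ S and |S \ T| ≤ 3s*, and set B = T \ S (nonempty). Let i ∈ B maximize ‖Φ_{S∪{j}} Xθ‖ over j ∈ B. Assume event E_n holds, min_{j∈T} θ_j² ≥ 8βD log p / (nν²), βD ≥ 2L, and 2/β ≤ 3D log p. Then log(π(S ∪ {i}) / π(S)) ≥ (D/2) log p; equivalently π(S ∪ {i}) ≥ p^{D/2} π(S). -/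
open scoped BigOperators
open Finset

noncomputable section

/-- The unnormalized weight exp(G(S,Y) − m(S)), where G(S,Y) = ‖Φ_S Y‖²/β and
m(S) = D|S| log p + (2/β) trace(Φ_S) + (4n/β) 1{|S| > 4s}. -/
noncomputable def postWt {n p : ℕ} (X : Fin p → EuclideanSpace ℝ (Fin n))
    (Y : EuclideanSpace ℝ (Fin n)) (β D : ℝ) (s : ℕ) (S : Finset (Fin p)) : ℝ :=
  Real.exp (‖proj X S Y‖ ^ 2 / β -
    (D * S.card * Real.log p +
      2 * LinearMap.trace ℝ (EuclideanSpace ℝ (Fin n)) (proj X S) / β +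
      if 4 * s < S.card then 4 * n / β else 0))

/-- The probability distribution π(S) ∝ exp(G(S,Y) − m(S)) on subsets of {1,…,p}. -/
noncomputable def postPi {n p : ℕ} (X : Fin p → EuclideanSpace ℝ (Fin n))
    (Y : EuclideanSpace ℝ (Fin n)) (β D : ℝ) (s : ℕ) (S : Finset (Fin p)) : ℝ :=
  postWt X Y β D s S / ∑ S' : Finset (Fin p), postWt X Y β D s S'
section Aux

open scoped RealInnerProductSpace

variable {N : ℕ}

lemma orthProj_sup_singleton (K : Submodule ℝ (EuclideanSpace ℝ (Fin N)))
    (x : EuclideanSpace ℝ (Fin N))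
    (hv : x - (Submodule.orthogonalProjection K x : EuclideanSpace ℝ (Fin N)) ≠ 0)
    (y : EuclideanSpace ℝ (Fin N)) :
    ((Submodule.orthogonalProjection (K ⊔ (ℝ ∙ x)) y : EuclideanSpace ℝ (Fin N))) =
      (Submodule.orthogonalProjection K y : EuclideanSpace ℝ (Fin N)) +
        (⟪x - (Submodule.orthogonalProjection K x : EuclideanSpace ℝ (Fin N)), y⟫ /
            ‖x - (Submodule.orthogonalProjection K x : EuclideanSpace ℝ (Fin N))‖ ^ 2) •
          (x - (Submodule.orthogonalProjection K x : EuclideanSpace ℝ (Fin N))) := by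
  set v : EuclideanSpace ℝ (Fin N) := x - (Submodule.orthogonalProjection K x : EuclideanSpace ℝ (Fin N))
    with hvdef
  have hvK : v ∈ Kᗮ := Submodule.sub_starProjection_mem_orthogonal x
  set t : ℝ := ⟪v, y⟫ / ‖v‖ ^ 2 with htdef
  have hKle : K ≤ K ⊔ (ℝ ∙ x) := le_sup_left
  have hnv : ‖v‖ ^ 2 ≠ 0 := pow_ne_zero _ (norm_ne_zero_iff.2 hv)
  apply Submodule.eq_starProjection_of_mem_of_inner_eq_zero
  · refine Submodule.add_mem _ (hKle (Submodule.orthogonalProjection K y).2) (Submodule.smul_mem _ _ ?_)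
    have hx : x ∈ K ⊔ (ℝ ∙ x) :=
      Submodule.mem_sup_right (Submodule.mem_span_singleton_self x)
    exact Submodule.sub_mem _ hx (hKle (Submodule.orthogonalProjection K x).2)
  · intro w hw
    rcases Submodule.mem_sup.1 hw with ⟨a, ha, b, hb, rfl⟩
    rcases Submodule.mem_span_singleton.1 hb with ⟨c, rfl⟩
    have hPx : (Submodule.orthogonalProjection K x : EuclideanSpace ℝ (Fin N)) ∈ K :=
      (Submodule.orthogonalProjection K x).2
    have hxv : c • x = c • (Submodule.orthogonalProjection K x : EuclideanSpace ℝ (Fin N)) + c • v := by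
      rw [← smul_add]; congr 1; simp [hvdef]
    have horto : ∀ k ∈ K,
        ⟪y - ((Submodule.orthogonalProjection K y : EuclideanSpace ℝ (Fin N)) + t • v), k⟫ = 0 := by
      intro k hk
      have h1 : ⟪y - (Submodule.orthogonalProjection K y : EuclideanSpace ℝ (Fin N)), k⟫ = 0 :=
        Submodule.starProjection_inner_eq_zero y k hk
      have h2 : ⟪v, k⟫ = 0 := by
        rw [real_inner_comm]; exact (Submodule.mem_orthogonal K v).1 hvK k hk
      have h3 : y - ((Submodule.orthogonalProjection K y : EuclideanSpace ℝ (Fin N)) + t • v)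
          = (y - (Submodule.orthogonalProjection K y : EuclideanSpace ℝ (Fin N))) - t • v := by abel
      rw [h3, inner_sub_left, h1, real_inner_smul_left, h2]
      ring
    have hvv : ⟪y - ((Submodule.orthogonalProjection K y : EuclideanSpace ℝ (Fin N)) + t • v), v⟫ = 0 := by
      have hPyv : ⟪(Submodule.orthogonalProjection K y : EuclideanSpace ℝ (Fin N)), v⟫ = 0 :=
        (Submodule.mem_orthogonal K v).1 hvK _ (Submodule.orthogonalProjection K y).2
      rw [inner_sub_left, inner_add_left, hPyv, real_inner_smul_left,
        real_inner_self_eq_norm_sq, htdef]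
      rw [div_mul_cancel₀ _ hnv, real_inner_comm]
      ring
    rw [hxv, ← add_assoc, inner_add_right, horto _ (K.add_mem ha (K.smul_mem c hPx)),
      real_inner_smul_right, hvv]
    ring

lemma orthProj_sup_singleton_norm_sq (K : Submodule ℝ (EuclideanSpace ℝ (Fin N)))
    (x : EuclideanSpace ℝ (Fin N))
    (hv : x - (Submodule.orthogonalProjection K x : EuclideanSpace ℝ (Fin N)) ≠ 0)
    (y : EuclideanSpace ℝ (Fin N)) :
    ‖(Submodule.orthogonalProjection (K ⊔ (ℝ ∙ x)) y : EuclideanSpace ℝ (Fin N))‖ ^ 2 =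
      ‖(Submodule.orthogonalProjection K y : EuclideanSpace ℝ (Fin N))‖ ^ 2 +
        ⟪x - (Submodule.orthogonalProjection K x : EuclideanSpace ℝ (Fin N)), y⟫ ^ 2 /
          ‖x - (Submodule.orthogonalProjection K x : EuclideanSpace ℝ (Fin N))‖ ^ 2 := by
  set v : EuclideanSpace ℝ (Fin N) := x - (Submodule.orthogonalProjection K x : EuclideanSpace ℝ (Fin N))
    with hvdef
  have hvK : v ∈ Kᗮ := Submodule.sub_starProjection_mem_orthogonal x
  have hnv : ‖v‖ ^ 2 ≠ 0 := pow_ne_zero _ (norm_ne_zero_iff.2 hv)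
  have hcross : ⟪(Submodule.orthogonalProjection K y : EuclideanSpace ℝ (Fin N)),
      (⟪v, y⟫ / ‖v‖ ^ 2) • v⟫ = 0 := by
    rw [real_inner_smul_right,
      (Submodule.mem_orthogonal K v).1 hvK _ (Submodule.orthogonalProjection K y).2]
    ring
  rw [orthProj_sup_singleton K x hv y, ← hvdef, norm_add_sq_real, hcross, norm_smul]
  rw [mul_pow, Real.norm_eq_abs, sq_abs, div_pow]
  field_simp
  ring

lemma trace_inner_smul (v w : EuclideanSpace ℝ (Fin N))
    (f : (EuclideanSpace ℝ (Fin N)) →ₗ[ℝ] (EuclideanSpace ℝ (Fin N)))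
    (hf : ∀ y, f y = ⟪v, y⟫ • w) :
    LinearMap.trace ℝ (EuclideanSpace ℝ (Fin N)) f = ⟪v, w⟫ := by
  have h : f = dualTensorHom ℝ (EuclideanSpace ℝ (Fin N)) (EuclideanSpace ℝ (Fin N))
      ((innerₗ (EuclideanSpace ℝ (Fin N)) v) ⊗ₜ[ℝ] w) := by
    apply LinearMap.ext; intro y
    simp [hf, dualTensorHom_apply]
  rw [h, LinearMap.trace_eq_contract_apply]
  simp

lemma proj_apply {n p : ℕ} (X : Fin p → EuclideanSpace ℝ (Fin n)) (S : Finset (Fin p))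
    (y : EuclideanSpace ℝ (Fin n)) :
    proj X S y = (Submodule.orthogonalProjection (colSpan X S) y : EuclideanSpace ℝ (Fin n)) := rfl

lemma colSpan_insert {n p : ℕ} (X : Fin p → EuclideanSpace ℝ (Fin n)) (S : Finset (Fin p))
    (i : Fin p) : colSpan X (insert i S) = colSpan X S ⊔ (ℝ ∙ X i) := by
  unfold colSpan
  rw [Finset.coe_insert, Set.image_insert_eq, Submodule.span_insert, sup_comm]

lemma mem_colSpan_repr {n p : ℕ} (X : Fin p → EuclideanSpace ℝ (Fin n)) (S : Finset (Fin p))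
    (x : EuclideanSpace ℝ (Fin n)) (hx : x ∈ colSpan X S) :
    ∃ w : Fin p → ℝ, (∀ j ∉ S, w j = 0) ∧ x = ∑ j ∈ S, w j • X j := by
  rcases (Finsupp.mem_span_image_iff_linearCombination ℝ).1 hx with ⟨l, hl, rfl⟩
  refine ⟨fun j => l j, fun j hj => ?_, ?_⟩
  · by_contra h
    exact hj ((Finsupp.mem_supported ℝ l).1 hl (Finsupp.mem_support_iff.2 h))
  · rw [Finsupp.linearCombination_apply]
    rw [Finsupp.sum_of_support_subset l (Finset.coe_subset.1 ((Finsupp.mem_supported ℝ l).1 hl)) _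
      (fun i _ => zero_smul ℝ (X i))]

lemma re_resid_general {n p m : ℕ} {X : Fin p → EuclideanSpace ℝ (Fin n)} {ν : ℝ}
    (hν : 0 ≤ (n : ℝ) * ν) (hRE : RECond X ν m) (S T : Finset (Fin p)) (θ : Fin p → ℝ)
    (hcard : (T ∪ S).card ≤ m) :
    (n : ℝ) * ν * ∑ j ∈ T \ S, θ j ^ 2 ≤
      ‖(∑ k ∈ T, θ k • X k) - proj X S (∑ k ∈ T, θ k • X k)‖ ^ 2 := by
  classical
  set μ := ∑ k ∈ T, θ k • X k with hμ
  have hPμ : proj X S μ ∈ colSpan X S := (Submodule.orthogonalProjection (colSpan X S) μ).2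
  obtain ⟨w, hw0, hwsum⟩ := mem_colSpan_repr X S _ hPμ
  set c : Fin p → ℝ := fun k => (if k ∈ T then θ k else 0) - w k with hc
  have hrepr : μ - proj X S μ = ∑ k ∈ T ∪ S, c k • X k := by
    have h1 : ∑ k ∈ T ∪ S, (if k ∈ T then θ k else 0) • X k = μ := by
      rw [hμ]
      refine (Finset.sum_subset Finset.subset_union_left ?_).symm.trans ?_
      · intro x _ hx; simp [hx]
      · exact Finset.sum_congr rfl fun x hx => by simp [hx]
    have h2 : ∑ k ∈ T ∪ S, w k • X k = proj X S μ := by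
      rw [hwsum]
      refine (Finset.sum_subset Finset.subset_union_right ?_).symm
      intro x _ hx; simp [hw0 x hx]
    calc μ - proj X S μ = (∑ k ∈ T ∪ S, (if k ∈ T then θ k else 0) • X k)
          - ∑ k ∈ T ∪ S, w k • X k := by rw [h1, h2]
      _ = ∑ k ∈ T ∪ S, c k • X k := by
          rw [← Finset.sum_sub_distrib]
          exact Finset.sum_congr rfl fun k _ => by rw [hc]; simp [sub_smul]
  have hre := hRE (T ∪ S) hcard c
  have hsub : ∑ j ∈ T \ S, θ j ^ 2 ≤ ∑ j ∈ T ∪ S, c j ^ 2 := by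
    have h3 : ∀ j ∈ T \ S, θ j ^ 2 = c j ^ 2 := by
      intro j hj
      rw [Finset.mem_sdiff] at hj
      rw [hc]; simp [hj.1, hw0 j hj.2]
    rw [Finset.sum_congr rfl h3]
    exact Finset.sum_le_sum_of_subset_of_nonneg
      (Finset.sdiff_subset.trans Finset.subset_union_left)
      (fun _ _ _ => sq_nonneg _)
  rw [hrepr]
  exact le_trans (mul_le_mul_of_nonneg_left hsub hν) hre

end Aux

open scoped RealInnerProductSpace

set_option maxHeartbeats 2000000 in
/-- for S with T ⊄ S, |S \ T| ≤ 3s*, B = T \ S, and i ∈ B maximizing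
‖Φ_{S∪{j}} Xθ‖ over j ∈ B: under E_n, the beta-min condition, βD ≥ 2L and 2/β ≤ 3D log p,
log(π(S ∪ {i})/π(S)) ≥ (D/2) log p. -/
theorem stmt7 {n p s : ℕ} (hn : 0 < n) (hp : 2 ≤ p) (hs : 0 < s) (hsp : 6 * s ≤ p)
    (X : Fin p → EuclideanSpace ℝ (Fin n))
    (hX : ∀ j, ‖X j‖ = Real.sqrt n)
    {ν : ℝ} (hν : 0 < ν) (hRE : RECond X ν (6 * s))
    (θ : Fin p → ℝ) (T : Finset (Fin p)) (hT : T = Finset.univ.filter fun j => θ j ≠ 0)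
    (hTcard : T.card = s)
    (ε Y : EuclideanSpace ℝ (Fin n)) (hY : Y = (∑ j, θ j • X j) + ε)
    (β D L : ℝ) (hβ : 0 < β) (hD : 0 < D) (hL : 0 < L)
    (hE : ∀ S : Finset (Fin p), S.card < 6 * s → ∀ j ∉ S,
      (inner ℝ (X j - proj X S (X j)) ε : ℝ) ^ 2 ≤ (n : ℝ) * L * ν * Real.log p)
    (hmin : ∀ j ∈ T, 8 * β * D * Real.log p / ((n : ℝ) * ν ^ 2) ≤ θ j ^ 2)
    (hβD : 2 * L ≤ β * D) (hβD' : 2 / β ≤ 3 * D * Real.log p)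
    (S : Finset (Fin p)) (hTS : ¬ T ⊆ S) (hScard : (S \ T).card ≤ 3 * s)
    (i : Fin p) (hiB : i ∈ T \ S)
    (himax : ∀ j ∈ T \ S,
      ‖proj X (insert j S) (∑ k, θ k • X k)‖ ≤ ‖proj X (insert i S) (∑ k, θ k • X k)‖) :
    (D / 2) * Real.log p ≤
      Real.log (postPi X Y β D s (insert i S) / postPi X Y β D s S) := by
  classical
  have hlogp : 0 < Real.log p := Real.log_pos (by exact_mod_cast lt_of_lt_of_le one_lt_two hp)
  set logp := Real.log p with hlogp_def
  have hiT : i ∈ T := (Finset.mem_sdiff.1 hiB).1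
  have hiS : i ∉ S := (Finset.mem_sdiff.1 hiB).2
  -- cardinality facts
  have hSint : (S ∩ T).card ≤ s - 1 := by
    have h1 : S ∩ T ⊆ T.erase i := by
      intro j hj; rcases Finset.mem_inter.1 hj with ⟨hjS, hjT⟩
      exact Finset.mem_erase.2 ⟨fun h => hiS (h ▸ hjS), hjT⟩
    calc (S ∩ T).card ≤ (T.erase i).card := Finset.card_le_card h1
      _ = s - 1 := by rw [Finset.card_erase_of_mem hiT, hTcard]
  have hsd : (S \ T).card + (S ∩ T).card = S.card := by
    rw [Finset.card_sdiff_add_card_inter]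
  have hScard' : S.card + 1 ≤ 4 * s := by omega
  have hcard6 : S.card < 6 * s := by omega
  have hcardTS : (T ∪ S).card ≤ 6 * s := by
    have h1 := Finset.card_union_le T S
    omega
  have hcardiS : (insert i S).card = S.card + 1 := Finset.card_insert_of_notMem hiS
  -- the signal μ
  set μ : EuclideanSpace ℝ (Fin n) := ∑ k, θ k • X k with hμdef
  have hμT : μ = ∑ k ∈ T, θ k • X k := by
    rw [hμdef]
    refine (Finset.sum_subset (Finset.subset_univ T) ?_).symm
    intro x _ hx
    have hx0 : θ x = 0 := by
      by_contra h
      exact hx (hT ▸ Finset.mem_filter.2 ⟨Finset.mem_univ x, h⟩)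
    simp [hx0]
  have hνn : (0:ℝ) < (n:ℝ) * ν := by positivity
  -- residual vectors
  set v : Fin p → EuclideanSpace ℝ (Fin n) := fun j => X j - proj X S (X j) with hvdef
  have hvresid : ∀ j ∉ S, (n:ℝ) * ν ≤ ‖v j‖ ^ 2 := by
    intro j hjS
    have hd : ({j} : Finset (Fin p)) \ S = {j} := by
      ext k; simp only [Finset.mem_sdiff, Finset.mem_singleton]
      constructor
      · exact fun h => h.1
      · rintro rfl; exact ⟨rfl, hjS⟩
    have hcard : (({j} : Finset (Fin p)) ∪ S).card ≤ 6 * s := by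
      have h2 := Finset.card_union_le ({j} : Finset (Fin p)) S
      simp only [Finset.card_singleton] at h2
      omega
    have h3 := re_resid_general hνn.le hRE S {j} (fun k => if k = j then (1:ℝ) else 0) hcard
    rw [hd] at h3
    simpa using h3
  have hv0 : ∀ j ∉ S, v j ≠ 0 := by
    intro j hjS h0
    have h1 := hvresid j hjS
    rw [h0] at h1
    simp only [norm_zero] at h1
    nlinarith
  -- projection norm formulas for inserted sets
  have hprojnorm : ∀ j ∉ S, ∀ y : EuclideanSpace ℝ (Fin n), ‖proj X (insert j S) y‖ ^ 2
      = ‖proj X S y‖ ^ 2 + (⟪v j, y⟫ : ℝ) ^ 2 / ‖v j‖ ^ 2 := by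
    intro j hjS y
    have h := orthProj_sup_singleton_norm_sq (colSpan X S) (X j) (hv0 j hjS) y
    simp only [hvdef]
    simp only [proj_apply]
    rw [colSpan_insert X S j, h]
  -- perpendicularity
  have hvperp : ∀ j : Fin p, ∀ w ∈ colSpan X S, (⟪v j, w⟫ : ℝ) = 0 := by
    intro j w hw
    rw [real_inner_comm]
    exact (Submodule.mem_orthogonal _ _).1 (Submodule.sub_starProjection_mem_orthogonal (X j)) w hw
  -- trace identity
  have hrpos : (0:ℝ) < ‖v i‖ ^ 2 := lt_of_lt_of_le hνn (hvresid i hiS)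
  have hrne : ‖v i‖ ^ 2 ≠ 0 := ne_of_gt hrpos
  have htrace : LinearMap.trace ℝ (EuclideanSpace ℝ (Fin n)) (proj X (insert i S))
      = LinearMap.trace ℝ (EuclideanSpace ℝ (Fin n)) (proj X S) + 1 := by
    set u : EuclideanSpace ℝ (Fin n) := (‖v i‖ ^ 2)⁻¹ • v i with hudef
    set g : EuclideanSpace ℝ (Fin n) →ₗ[ℝ] EuclideanSpace ℝ (Fin n) :=
      (innerₗ (EuclideanSpace ℝ (Fin n)) u).smulRight (v i) with hgdef
    have hgapp : ∀ y, g y = (⟪u, y⟫ : ℝ) • v i := by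
      intro y; rw [hgdef]; simp
    have hdecomp : proj X (insert i S) = proj X S + g := by
      apply LinearMap.ext; intro y
      have h := orthProj_sup_singleton (colSpan X S) (X i) (hv0 i hiS) y
      show proj X (insert i S) y = proj X S y + g y
      rw [hgapp, hudef, real_inner_smul_left]
      simp only [hvdef]
      simp only [proj_apply]
      rw [colSpan_insert X S i, h, div_eq_inv_mul]
    rw [hdecomp, map_add]
    congr 1
    rw [trace_inner_smul u (v i) g hgapp, hudef, real_inner_smul_left,
      real_inner_self_eq_norm_sq]
    field_simp [norm_ne_zero_iff.2 (hv0 i hiS)]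
  -- the set B and quantities
  have hBne : (T \ S).Nonempty := ⟨i, hiB⟩
  have hBcard : 1 ≤ (T \ S).card := Finset.card_pos.2 hBne
  have hBcards : (T \ S).card ≤ s := by
    have := Finset.card_le_card (Finset.sdiff_subset (s := T) (t := S))
    omega
  have hBc1 : (1:ℝ) ≤ ((T \ S).card : ℝ) := by exact_mod_cast hBcard
  have hm0pos : (0:ℝ) < 8 * β * D * logp / ((n : ℝ) * ν ^ 2) := by positivity
  have htm0 : ((T \ S).card : ℝ) * (8 * β * D * logp / ((n : ℝ) * ν ^ 2))
      ≤ ∑ j ∈ T \ S, θ j ^ 2 := by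
    calc ((T \ S).card : ℝ) * (8 * β * D * logp / ((n : ℝ) * ν ^ 2))
        = ∑ _j ∈ T \ S, (8 * β * D * logp / ((n : ℝ) * ν ^ 2)) := by
          rw [Finset.sum_const, nsmul_eq_mul]
      _ ≤ ∑ j ∈ T \ S, θ j ^ 2 :=
          Finset.sum_le_sum (fun j hj => hmin j (Finset.mem_sdiff.1 hj).1)
  have htpos : (0:ℝ) < ∑ j ∈ T \ S, θ j ^ 2 :=
    lt_of_lt_of_le (by nlinarith) htm0
  have htnonneg : (0:ℝ) ≤ ∑ j ∈ T \ S, θ j ^ 2 := htpos.le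
  -- lower bound on residual signal
  have hzlow : (n:ℝ) * ν * ∑ j ∈ T \ S, θ j ^ 2 ≤ ‖μ - proj X S μ‖ ^ 2 := by
    have := re_resid_general hνn.le hRE S T θ hcardTS
    rw [← hμT] at this
    exact this
  -- z as a sum over B
  have hzsum : μ - proj X S μ = ∑ k ∈ T \ S, θ k • v k := by
    rw [hμT, map_sum, ← Finset.sum_sub_distrib]
    have h1 : ∑ k ∈ T, (θ k • X k - proj X S (θ k • X k)) = ∑ k ∈ T, θ k • v k := by
      refine Finset.sum_congr rfl fun k _ => ?_
      rw [map_smul, ← smul_sub]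
    rw [h1]
    refine (Finset.sum_subset Finset.sdiff_subset ?_).symm
    intro x hxT hxB
    have hxS : x ∈ S := by
      by_contra hxS
      exact hxB (Finset.mem_sdiff.2 ⟨hxT, hxS⟩)
    have hmem : X x ∈ colSpan X S :=
      Submodule.subset_span (Set.mem_image_of_mem X (Finset.mem_coe.2 hxS))
    have hproj : proj X S (X x) = X x := by
      rw [proj_apply]
      exact Submodule.starProjection_eq_self_iff.2 hmem
    have hvx : v x = 0 := by
      show X x - proj X S (X x) = 0
      rw [hproj, sub_self]
    rw [hvx, smul_zero]
  have hvz : ∀ j : Fin p, (⟪v j, μ - proj X S μ⟫ : ℝ) = ⟪v j, μ⟫ := by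
    intro j
    have hPm : proj X S μ ∈ colSpan X S := (Submodule.orthogonalProjection (colSpan X S) μ).2
    rw [inner_sub_right, hvperp j _ hPm]
    ring
  -- ‖v j‖² ≤ n
  have hvle : ∀ j : Fin p, ‖v j‖ ^ 2 ≤ (n : ℝ) := by
    intro j
    have hsplit : X j = proj X S (X j) + v j := by
      show X j = proj X S (X j) + (X j - proj X S (X j)); abel
    have hPj : proj X S (X j) ∈ colSpan X S := (Submodule.orthogonalProjection (colSpan X S) (X j)).2
    have hcross : (⟪proj X S (X j), v j⟫ : ℝ) = 0 := by
      rw [real_inner_comm]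
      exact hvperp j _ hPj
    have h1 : ‖X j‖ ^ 2 = ‖proj X S (X j)‖ ^ 2 + 2 * (⟪proj X S (X j), v j⟫ : ℝ)
        + ‖v j‖ ^ 2 := by
      conv_lhs => rw [hsplit]
      exact norm_add_sq_real _ _
    rw [hcross] at h1
    have h2 : ‖X j‖ ^ 2 = (n : ℝ) := by
      rw [hX j, Real.sq_sqrt (Nat.cast_nonneg n)]
    nlinarith [sq_nonneg ‖proj X S (X j)‖]
  -- the maximal q
  have hqmax : ∀ j ∈ T \ S, (⟪v j, μ⟫ : ℝ) ^ 2 / ‖v j‖ ^ 2 ≤ (⟪v i, μ⟫ : ℝ) ^ 2 / ‖v i‖ ^ 2 := by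
    intro j hj
    have hjS : j ∉ S := (Finset.mem_sdiff.1 hj).2
    have h1 := hprojnorm j hjS μ
    have h2 := hprojnorm i hiS μ
    have h3 : ‖proj X (insert j S) μ‖ ≤ ‖proj X (insert i S) μ‖ := himax j hj
    have h4 : ‖proj X (insert j S) μ‖ ^ 2 ≤ ‖proj X (insert i S) μ‖ ^ 2 :=
      pow_le_pow_left₀ (norm_nonneg _) h3 2
    rw [h1, h2] at h4
    linarith
  have hqinonneg : (0:ℝ) ≤ (⟪v i, μ⟫ : ℝ) ^ 2 / ‖v i‖ ^ 2 := by positivity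
  -- per-term bound |⟪v j, μ⟫| ≤ √(q i) √n
  have hterm : ∀ j ∈ T \ S, |(⟪v j, μ⟫ : ℝ)|
      ≤ Real.sqrt ((⟪v i, μ⟫ : ℝ) ^ 2 / ‖v i‖ ^ 2) * Real.sqrt n := by
    intro j hj
    have hjS : j ∉ S := (Finset.mem_sdiff.1 hj).2
    have hvj : (0:ℝ) < ‖v j‖ ^ 2 := lt_of_lt_of_le hνn (hvresid j hjS)
    have h1 : (⟪v j, μ⟫ : ℝ) ^ 2 ≤ ((⟪v i, μ⟫ : ℝ) ^ 2 / ‖v i‖ ^ 2) * (n : ℝ) := by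
      have h2 : (⟪v j, μ⟫ : ℝ) ^ 2 = ((⟪v j, μ⟫ : ℝ) ^ 2 / ‖v j‖ ^ 2) * ‖v j‖ ^ 2 := by
        field_simp [norm_ne_zero_iff.2 (hv0 j hjS)]
      rw [h2]
      exact mul_le_mul (hqmax j hj) (hvle j) hvj.le hqinonneg
    calc |(⟪v j, μ⟫ : ℝ)| = Real.sqrt ((⟪v j, μ⟫ : ℝ) ^ 2) := (Real.sqrt_sq_eq_abs _).symm
      _ ≤ Real.sqrt (((⟪v i, μ⟫ : ℝ) ^ 2 / ‖v i‖ ^ 2) * (n : ℝ)) := Real.sqrt_le_sqrt h1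
      _ = Real.sqrt ((⟪v i, μ⟫ : ℝ) ^ 2 / ‖v i‖ ^ 2) * Real.sqrt n :=
          Real.sqrt_mul hqinonneg _
  -- ℓ¹–ℓ² bound
  have hl1 : ∑ j ∈ T \ S, |θ j| ≤ Real.sqrt ((T \ S).card : ℝ)
      * Real.sqrt (∑ j ∈ T \ S, θ j ^ 2) := by
    have h1 : (∑ j ∈ T \ S, |θ j|) ^ 2 ≤ ((T \ S).card : ℝ) * ∑ j ∈ T \ S, θ j ^ 2 := by
      have := sq_sum_le_card_mul_sum_sq (s := T \ S) (f := fun j => |θ j|)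
      simpa [sq_abs] using this
    have h2 : ∑ j ∈ T \ S, |θ j| ≤ Real.sqrt (((T \ S).card : ℝ) * ∑ j ∈ T \ S, θ j ^ 2) := by
      rw [← Real.sqrt_sq (Finset.sum_nonneg fun j _ => abs_nonneg _)]
      exact Real.sqrt_le_sqrt h1
    rw [← Real.sqrt_mul (Nat.cast_nonneg _)]
    exact h2
  -- chain: n ν t ≤ √(q i) √n √|B| √t
  have hchain : (n:ℝ) * ν * ∑ j ∈ T \ S, θ j ^ 2
      ≤ Real.sqrt ((⟪v i, μ⟫ : ℝ) ^ 2 / ‖v i‖ ^ 2) * Real.sqrt n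
        * (Real.sqrt ((T \ S).card : ℝ) * Real.sqrt (∑ j ∈ T \ S, θ j ^ 2)) := by
    have hz2 : ‖μ - proj X S μ‖ ^ 2 = ∑ j ∈ T \ S, θ j * (⟪v j, μ⟫ : ℝ) := by
      rw [← real_inner_self_eq_norm_sq]
      conv_lhs => rw [hzsum]
      rw [sum_inner]
      refine Finset.sum_congr rfl fun j _ => ?_
      rw [real_inner_smul_left, ← hzsum, hvz j]
    have hsqn : (0:ℝ) ≤ Real.sqrt ((⟪v i, μ⟫ : ℝ) ^ 2 / ‖v i‖ ^ 2) * Real.sqrt n := by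
      positivity
    have hb : ∑ j ∈ T \ S, θ j * (⟪v j, μ⟫ : ℝ)
        ≤ (Real.sqrt ((⟪v i, μ⟫ : ℝ) ^ 2 / ‖v i‖ ^ 2) * Real.sqrt n) * ∑ j ∈ T \ S, |θ j| := by
      rw [Finset.mul_sum]
      refine Finset.sum_le_sum fun j hj => ?_
      calc θ j * (⟪v j, μ⟫ : ℝ) ≤ |θ j * (⟪v j, μ⟫ : ℝ)| := le_abs_self _
        _ = |θ j| * |(⟪v j, μ⟫ : ℝ)| := abs_mul _ _
        _ ≤ |θ j| * (Real.sqrt ((⟪v i, μ⟫ : ℝ) ^ 2 / ‖v i‖ ^ 2) * Real.sqrt n) :=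
            mul_le_mul_of_nonneg_left (hterm j hj) (abs_nonneg _)
        _ = (Real.sqrt ((⟪v i, μ⟫ : ℝ) ^ 2 / ‖v i‖ ^ 2) * Real.sqrt n) * |θ j| := by ring
    calc (n:ℝ) * ν * ∑ j ∈ T \ S, θ j ^ 2 ≤ ‖μ - proj X S μ‖ ^ 2 := hzlow
      _ = ∑ j ∈ T \ S, θ j * (⟪v j, μ⟫ : ℝ) := hz2
      _ ≤ (Real.sqrt ((⟪v i, μ⟫ : ℝ) ^ 2 / ‖v i‖ ^ 2) * Real.sqrt n) * ∑ j ∈ T \ S, |θ j| := hb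
      _ ≤ (Real.sqrt ((⟪v i, μ⟫ : ℝ) ^ 2 / ‖v i‖ ^ 2) * Real.sqrt n)
            * (Real.sqrt ((T \ S).card : ℝ) * Real.sqrt (∑ j ∈ T \ S, θ j ^ 2)) :=
          mul_le_mul_of_nonneg_left hl1 hsqn
  -- squared chain
  have hsq : ((n:ℝ) * ν * ∑ j ∈ T \ S, θ j ^ 2) ^ 2
      ≤ ((⟪v i, μ⟫ : ℝ) ^ 2 / ‖v i‖ ^ 2) * ((n:ℝ) * ((T \ S).card : ℝ)
        * ∑ j ∈ T \ S, θ j ^ 2) := by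
    have h1 := pow_le_pow_left₀ (by positivity) hchain 2
    calc ((n:ℝ) * ν * ∑ j ∈ T \ S, θ j ^ 2) ^ 2
        ≤ (Real.sqrt ((⟪v i, μ⟫ : ℝ) ^ 2 / ‖v i‖ ^ 2) * Real.sqrt n
          * (Real.sqrt ((T \ S).card : ℝ) * Real.sqrt (∑ j ∈ T \ S, θ j ^ 2))) ^ 2 := h1
      _ = ((⟪v i, μ⟫ : ℝ) ^ 2 / ‖v i‖ ^ 2) * ((n:ℝ) * ((T \ S).card : ℝ)
          * ∑ j ∈ T \ S, θ j ^ 2) := by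
          rw [mul_pow, mul_pow, mul_pow]
          rw [Real.sq_sqrt hqinonneg, Real.sq_sqrt (Nat.cast_nonneg n),
            Real.sq_sqrt (Nat.cast_nonneg _), Real.sq_sqrt htnonneg]
          ring
  -- conclude q i ≥ 8βD log p
  have h8 : 8 * β * D * logp ≤ (⟪v i, μ⟫ : ℝ) ^ 2 / ‖v i‖ ^ 2 := by
    have e1 : (8 * β * D * logp / ((n : ℝ) * ν ^ 2)) * ((n:ℝ) * ν ^ 2) = 8 * β * D * logp :=
      div_mul_cancel₀ _ (by positivity)
    have e2 : ((n:ℝ) * ν ^ 2) * (((T \ S).card : ℝ) * (8 * β * D * logp / ((n : ℝ) * ν ^ 2)))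
        ≤ ((n:ℝ) * ν ^ 2) * ∑ j ∈ T \ S, θ j ^ 2 :=
      mul_le_mul_of_nonneg_left htm0 (by positivity)
    have e3 : 8 * β * D * logp * ((T \ S).card : ℝ)
        ≤ ((n:ℝ) * ν ^ 2) * ∑ j ∈ T \ S, θ j ^ 2 := by nlinarith [e1, e2]
    have e4 := mul_le_mul_of_nonneg_right e3
      (show (0:ℝ) ≤ (n:ℝ) * ∑ j ∈ T \ S, θ j ^ 2 by positivity)
    have hpos : (0:ℝ) < (n:ℝ) * ((T \ S).card : ℝ) * ∑ j ∈ T \ S, θ j ^ 2 := by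
      have hn' : (0:ℝ) < (n:ℝ) := by exact_mod_cast hn
      exact mul_pos (mul_pos hn' (lt_of_lt_of_le one_pos hBc1)) htpos
    have key : 8 * β * D * logp * ((n:ℝ) * ((T \ S).card : ℝ) * ∑ j ∈ T \ S, θ j ^ 2)
        ≤ ((⟪v i, μ⟫ : ℝ) ^ 2 / ‖v i‖ ^ 2)
          * ((n:ℝ) * ((T \ S).card : ℝ) * ∑ j ∈ T \ S, θ j ^ 2) := by
      nlinarith [e4, hsq]
    exact le_of_mul_le_mul_right key hpos
  have ha2 : 8 * β * D * logp * ‖v i‖ ^ 2 ≤ (⟪v i, μ⟫ : ℝ) ^ 2 :=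
    (le_div_iff₀ hrpos).1 h8
  -- noise bound
  have he2 : (⟪v i, ε⟫ : ℝ) ^ 2 ≤ (n:ℝ) * L * ν * logp := hE S hcard6 i hiS
  have he16 : 16 * (⟪v i, ε⟫ : ℝ) ^ 2 ≤ (⟪v i, μ⟫ : ℝ) ^ 2 := by
    have h0 := hvresid i hiS
    have h1 : (n:ℝ) * L * ν * logp ≤ ‖v i‖ ^ 2 * (L * logp) := by
      have h1' := mul_le_mul_of_nonneg_right h0 (mul_nonneg hL.le hlogp.le)
      calc (n:ℝ) * L * ν * logp = ((n:ℝ) * ν) * (L * logp) := by ring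
        _ ≤ ‖v i‖ ^ 2 * (L * logp) := h1'
    have h2 : ‖v i‖ ^ 2 * (L * logp) ≤ ‖v i‖ ^ 2 * (β * D / 2 * logp) := by
      have h2' : L * logp ≤ β * D / 2 * logp := by nlinarith [hβD, hlogp]
      exact mul_le_mul_of_nonneg_left h2' hrpos.le
    nlinarith [he2, h1, h2, ha2]
  -- gain
  have hgain : ‖proj X S Y‖ ^ 2 + 9 / 2 * (β * D * logp) ≤ ‖proj X (insert i S) Y‖ ^ 2 := by
    have h1 := hprojnorm i hiS Y
    have hinner : (⟪v i, Y⟫ : ℝ) = (⟪v i, μ⟫ : ℝ) + (⟪v i, ε⟫ : ℝ) := by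
      rw [hY, inner_add_right]
    have h2 : 9 / 2 * (β * D * logp) * ‖v i‖ ^ 2 ≤ (⟪v i, Y⟫ : ℝ) ^ 2 := by
      rw [hinner]
      nlinarith [sq_nonneg ((⟪v i, μ⟫ : ℝ) + 4 * (⟪v i, ε⟫ : ℝ)), he16, ha2]
    have h3 : 9 / 2 * (β * D * logp) ≤ (⟪v i, Y⟫ : ℝ) ^ 2 / ‖v i‖ ^ 2 :=
      (le_div_iff₀ hrpos).2 h2
    rw [h1]
    linarith
  -- ratio of weights
  have hsumpos : 0 < ∑ S' : Finset (Fin p), postWt X Y β D s S' :=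
    Finset.sum_pos (fun S' _ => Real.exp_pos _) Finset.univ_nonempty
  have hratio : postPi X Y β D s (insert i S) / postPi X Y β D s S
      = postWt X Y β D s (insert i S) / postWt X Y β D s S := by
    unfold postPi
    rw [div_div_div_comm, div_self (ne_of_gt hsumpos), div_one]
  rw [hratio]
  unfold postWt
  rw [← Real.exp_sub, Real.log_exp]
  -- final arithmetic
  have hind1 : ¬ (4 * s < (insert i S).card) := by omega
  have hind2 : ¬ (4 * s < S.card) := by omega
  rw [if_neg hind1, if_neg hind2, htrace, hcardiS]
  have hgainβ : ‖proj X S Y‖ ^ 2 / β + 9 / 2 * (D * logp) ≤ ‖proj X (insert i S) Y‖ ^ 2 / β := by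
    rw [div_add' _ _ _ (ne_of_gt hβ), div_le_div_iff₀ hβ hβ]
    nlinarith [hgain]
  have hc : (((S.card : ℕ) + 1 : ℕ) : ℝ) = (S.card : ℝ) + 1 := by push_cast; ring
  rw [hc]
  have htr : 2 * (LinearMap.trace ℝ (EuclideanSpace ℝ (Fin n)) (proj X S) + 1) / β
      = 2 * LinearMap.trace ℝ (EuclideanSpace ℝ (Fin n)) (proj X S) / β + 2 / β := by
    field_simp
  rw [htr]
  nlinarith [hgainβ, hβD', hlogp, hD]

end
end
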